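/- Let (μ*, λ*, x*) be a 2D-eigentriplet of Hermitian (A, C): (A - μ*C)x* = λ*x*, x*^H C x* = 0, ‖x*‖ = 1. Let x̃ ∈ ℂ^n satisfy x̃^H C x̃ = 0 and ‖x̃‖ = 1, and set ε = ‖x* - x̃‖. Then |x̃^H A x̃ - λ*| ≤ ‖A - μ*C - λ*I‖ · ε². -/

import Mathlib

open Matrix

noncomputable def enorm' {m : ℕ} (x : Fin m → ℂ) : ℝ :=
  Real.sqrt (star x ⬝ᵥ x).re

noncomputable def mnorm {m k : ℕ} (M : Matrix (Fin m) (Fin k) ℂ) : ℝ :=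
  sSup {r | ∃ z : Fin k → ℂ, enorm' z = 1 ∧ r = enorm' (M *ᵥ z)}

lemma enorm_eq {m : ℕ} (x : Fin m → ℂ) :
    enorm' x = ‖(WithLp.equiv 2 (Fin m → ℂ)).symm x‖ := by
  rw [enorm', EuclideanSpace.norm_eq]
  congr 1
  rw [dotProduct, Complex.re_sum]
  refine Finset.sum_congr rfl fun i _ => ?_
  show (star (x i) * x i).re = _
  rw [Complex.star_def, RCLike.conj_mul (x i)]
  norm_cast

lemma enorm_mulVec_eq {m k : ℕ} (M : Matrix (Fin m) (Fin k) ℂ) (z : Fin k → ℂ) :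
    enorm' (M *ᵥ z) = ‖(Matrix.toEuclideanLin M).toContinuousLinearMap
      ((WithLp.equiv 2 (Fin k → ℂ)).symm z)‖ := by
  rw [enorm_eq]
  congr 1

lemma mnorm_bound {m k : ℕ} (M : Matrix (Fin m) (Fin k) ℂ) (z : Fin k → ℂ) :
    enorm' (M *ᵥ z) ≤ mnorm M * enorm' z := by
  set f := (Matrix.toEuclideanLin M).toContinuousLinearMap with hf
  have hbdd : BddAbove {r | ∃ z : Fin k → ℂ, enorm' z = 1 ∧ r = enorm' (M *ᵥ z)} := by
    refine ⟨‖f‖, fun r hr => ?_⟩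
    obtain ⟨u, hu1, rfl⟩ := hr
    rw [enorm_mulVec_eq]
    calc ‖f _‖ ≤ ‖f‖ * ‖(WithLp.equiv 2 (Fin k → ℂ)).symm u‖ := f.le_opNorm _
    _ = ‖f‖ := by rw [← enorm_eq, hu1, mul_one]
  by_cases hz : enorm' z = 0
  · have hz0 : z = 0 := by
      rw [enorm_eq, norm_eq_zero] at hz
      simpa using congrArg (WithLp.equiv 2 (Fin k → ℂ)) hz
    simp [hz0, hz, enorm_eq]
  · have hzpos : 0 < enorm' z := lt_of_le_of_ne (Real.sqrt_nonneg _) (Ne.symm hz)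
    set u : Fin k → ℂ := ((enorm' z : ℂ))⁻¹ • z with hu
    have hnu : enorm' u = 1 := by
      rw [hu, enorm_eq, WithLp.equiv_symm_apply, WithLp.toLp_smul, ← WithLp.equiv_symm_apply, norm_smul, ← enorm_eq]
      simp [Complex.norm_real, abs_of_pos hzpos, inv_mul_cancel₀ hz]
    have hmem : enorm' (M *ᵥ u) ∈ {r | ∃ z : Fin k → ℂ, enorm' z = 1 ∧ r = enorm' (M *ᵥ z)} :=
      ⟨u, hnu, rfl⟩
    have hle : enorm' (M *ᵥ u) ≤ mnorm M := le_csSup hbdd hmem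
    have hdec : enorm' (M *ᵥ z) = enorm' z * enorm' (M *ᵥ u) := by
      have : M *ᵥ z = (enorm' z : ℂ) • (M *ᵥ u) := by
        rw [hu, mulVec_smul, smul_smul, mul_inv_cancel₀ (by exact_mod_cast hz), one_smul]
      rw [this, enorm_eq, WithLp.equiv_symm_apply, WithLp.toLp_smul, ← WithLp.equiv_symm_apply, norm_smul, ← enorm_eq]
      simp [Complex.norm_real, abs_of_pos hzpos]
    rw [hdec, mul_comm]
    exact mul_le_mul_of_nonneg_right hle hzpos.le

lemma cauchy_dot {m : ℕ} (d w : Fin m → ℂ) :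
    ‖star d ⬝ᵥ w‖ ≤ enorm' d * enorm' w := by
  have := norm_inner_le_norm (𝕜 := ℂ) ((WithLp.equiv 2 (Fin m → ℂ)).symm d)
    ((WithLp.equiv 2 (Fin m → ℂ)).symm w)
  rw [show inner ℂ ((WithLp.equiv 2 (Fin m → ℂ)).symm d) ((WithLp.equiv 2 (Fin m → ℂ)).symm w) = star d ⬝ᵥ w from by rw [dotProduct_comm]; rfl] at this
  rw [← enorm_eq, ← enorm_eq] at this
  simpa using this

theorem rayleigh_quotient_second_order {n : ℕ}
    (A C : Matrix (Fin n) (Fin n) ℂ) (hA : A.IsHermitian) (hC : C.IsHermitian)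
    (μs lams : ℝ) (xs xt : Fin n → ℂ)
    (heig : (A - (μs : ℂ) • C) *ᵥ xs = (lams : ℂ) • xs)
    (hisos : star xs ⬝ᵥ (C *ᵥ xs) = 0)
    (hunits : star xs ⬝ᵥ xs = 1)
    (hisot : star xt ⬝ᵥ (C *ᵥ xt) = 0)
    (hunitt : star xt ⬝ᵥ xt = 1) :
    ‖star xt ⬝ᵥ (A *ᵥ xt) - (lams : ℂ)‖ ≤
      mnorm (A - (μs : ℂ) • C - (lams : ℂ) • 1) * enorm' (xs - xt) ^ 2 := by
  set B : Matrix (Fin n) (Fin n) ℂ := A - (μs : ℂ) • C - (lams : ℂ) • 1 with hBdef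
  set d : Fin n → ℂ := xs - xt with hd
  have hBxs : B *ᵥ xs = 0 := by
    rw [hBdef, sub_mulVec, heig, smul_mulVec, one_mulVec, sub_self]
  have hBherm : Bᴴ = B := by
    simp [hBdef, conjTranspose_sub, conjTranspose_smul, hA.eq, hC.eq,
      Complex.star_def, Complex.conj_ofReal]
  have hq : star xt ⬝ᵥ (B *ᵥ xt) = star xt ⬝ᵥ (A *ᵥ xt) - (lams : ℂ) := by
    simp [hBdef, sub_mulVec, dotProduct_sub, smul_mulVec, one_mulVec,
      dotProduct_smul, hisot, hunitt]
  have hxt : B *ᵥ xt = -(B *ᵥ d) := by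
    rw [hd, mulVec_sub, hBxs, zero_sub, neg_neg]
  have hzero : star xs ⬝ᵥ (B *ᵥ d) = 0 := by
    rw [dotProduct_mulVec]
    have hv : star xs ᵥ* B = 0 := by
      have h1 := congrArg star hBxs
      rw [star_mulVec, hBherm, star_zero] at h1
      exact h1
    rw [hv, zero_dotProduct]
  have hmain : star xt ⬝ᵥ (B *ᵥ xt) = star d ⬝ᵥ (B *ᵥ d) := by
    have hst : star xt = star xs - star d := by
      rw [hd, star_sub]; abel
    rw [hxt, hst, sub_dotProduct, dotProduct_neg, dotProduct_neg, hzero]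
    ring
  calc ‖star xt ⬝ᵥ (A *ᵥ xt) - (lams : ℂ)‖
      = ‖star d ⬝ᵥ (B *ᵥ d)‖ := by rw [← hq, hmain]
    _ ≤ enorm' d * enorm' (B *ᵥ d) := cauchy_dot _ _
    _ ≤ enorm' d * (mnorm B * enorm' d) :=
        mul_le_mul_of_nonneg_left (mnorm_bound B d) (Real.sqrt_nonneg _)
    _ = mnorm B * enorm' d ^ 2 := by ring
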